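/- Let B be a small category, C a cocomplete category, and Ψ : B ⥤ C a fully faithful functor. Let R : C ⥤ [Bᵒᵖ, Type] be the restricted Yoneda functor, R(c) = Hom_C(Ψ(−), c). If R is fully faithful (equivalently, Ψ is dense) and R preserves small colimits, then R is an equivalence of categories. -/

import Mathlib

open CategoryTheory CategoryTheory.Limits

universe u₁ u₂

/-- The restricted Yoneda functor, as defined in Mathlib of December 2024
(removed since; its replacement `restrictedULiftYoneda` inserts a `ULift`). -/
def CategoryTheory.Presheaf.restrictedYoneda.{v, u, u'} {C : Type u} [Category.{v} C]
    {ℰ : Type u'} [Category.{v} ℰ] (A : C ⥤ ℰ) : ℰ ⥤ Cᵒᵖ ⥤ Type v :=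
  yoneda ⋙ (Functor.whiskeringLeft _ _ (Type v)).obj (Functor.op A)

/-- For `Ψ` fully faithful, `Ψ ⋙ restrictedYoneda Ψ` is isomorphic to yoneda. -/
noncomputable def compRestrictedYonedaIsoYoneda
    {B : Type u₁} [SmallCategory B]
    {C : Type u₂} [Category.{u₁} C]
    (Ψ : B ⥤ C) [Ψ.Full] [Ψ.Faithful] :
    Ψ ⋙ Presheaf.restrictedYoneda Ψ ≅ yoneda :=
  NatIso.ofComponents (fun b => NatIso.ofComponents
    (fun b' => ((Functor.FullyFaithful.ofFullyFaithful Ψ).homEquiv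
        (X := b'.unop) (Y := b)).symm.toIso)
    (by intro X Y u; ext f; exact Ψ.map_injective (by show Ψ.map ((Functor.FullyFaithful.ofFullyFaithful Ψ).preimage (Ψ.map u.unop ≫ (f : Ψ.obj X.unop ⟶ Ψ.obj b))) = Ψ.map (u.unop ≫ (Functor.FullyFaithful.ofFullyFaithful Ψ).preimage (f : Ψ.obj X.unop ⟶ Ψ.obj b)); rw [Functor.FullyFaithful.map_preimage, Functor.map_comp]; exact congrArg (fun x => Ψ.map u.unop ≫ x) ((Functor.FullyFaithful.ofFullyFaithful Ψ).map_preimage (X := X.unop) (Y := b) f).symm)))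
    (by intro X Y u; ext Z g; exact Ψ.map_injective (by show Ψ.map ((Functor.FullyFaithful.ofFullyFaithful Ψ).preimage ((g : Ψ.obj Z.unop ⟶ Ψ.obj X) ≫ Ψ.map u)) = Ψ.map ((Functor.FullyFaithful.ofFullyFaithful Ψ).preimage (g : Ψ.obj Z.unop ⟶ Ψ.obj X) ≫ u); rw [Functor.FullyFaithful.map_preimage, Functor.map_comp]; exact congrArg (fun x => x ≫ Ψ.map u) ((Functor.FullyFaithful.ofFullyFaithful Ψ).map_preimage (X := Z.unop) (Y := X) g).symm))

/-- Let B be a small category, C a cocomplete category, and Ψ : B ⥤ C a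
fully faithful functor. Let R : C ⥤ [Bᵒᵖ, Type] be the restricted Yoneda functor,
R(c) = Hom_C(Ψ(−), c). If R is fully faithful (equivalently, Ψ is dense) and R
preserves small colimits, then R is an equivalence of categories. -/
theorem restrictedYoneda_isEquivalence
    (B : Type u₁) [SmallCategory B]
    (C : Type u₂) [Category.{u₁} C] [HasColimits C]
    (Ψ : B ⥤ C) [Ψ.Full] [Ψ.Faithful]
    (hfull : (Presheaf.restrictedYoneda Ψ).Full)
    (hfaithful : (Presheaf.restrictedYoneda Ψ).Faithful)
    (hpres : PreservesColimits (Presheaf.restrictedYoneda Ψ)) :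
    (Presheaf.restrictedYoneda Ψ).IsEquivalence := by
  have essSurj : (Presheaf.restrictedYoneda Ψ).EssSurj := by
    constructor
    intro P
    refine ⟨colimit ((CategoryOfElements.π P).leftOp ⋙ Ψ), ⟨?_⟩⟩
    refine (preservesColimitIso (Presheaf.restrictedYoneda Ψ) _).trans ?_
    refine (HasColimit.isoOfNatIso ((Functor.associator _ _ _) ≪≫
      Functor.isoWhiskerLeft (CategoryOfElements.π P).leftOp
        (compRestrictedYonedaIsoYoneda Ψ))).trans ?_
    refine (HasColimit.isoOfNatIso (Functor.isoWhiskerLeft (CategoryOfElements.π P).leftOp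
      uliftYonedaIsoYoneda.{0}.symm)).trans ?_
    exact IsColimit.coconePointUniqueUpToIso (colimit.isColimit _)
      (Presheaf.colimitOfRepresentable P)
  exact { }
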